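/- Let A and B be symmetric matrices of order 2m with zero diagonal over a commutative ring. Then Hf(A + B) = Σ_{k=0}^{m} Σ_{α ∈ Q_{2k,2m}} Hf(A[α]) · Hf(B(α)), where by convention Hf of the empty (0×0) matrix equals 1 (so the k=0 term contributes Hf(B) and the k=m term contributes Hf(A)). -/

import Mathlib

/-- The hafnian of a matrix over a linearly ordered finite index type:
the sum over all fixed-point-free involutions `σ` of the product of the
entries `A i (σ i)`, taken over one representative `i < σ i` of each orbit.
(For the empty index type this is `1`.) -/
def hafnian {ι : Type*} [Fintype ι] [LinearOrder ι] {R : Type*} [CommSemiring R]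
    (A : Matrix ι ι R) : R :=
  ∑ σ ∈ Finset.univ.filter
      (fun σ : Equiv.Perm ι => σ * σ = 1 ∧ ∀ i, σ i ≠ i),
    ∏ i ∈ Finset.univ.filter (fun i => i < σ i), A i (σ i)


section aux
variable {ι : Type*} [LinearOrder ι] {R : Type*} [CommSemiring R]

lemma sq_apply {σ : Equiv.Perm ι} (h : σ * σ = 1) (i : ι) : σ (σ i) = i := by
  have := Equiv.ext_iff.mp h i
  simpa [Equiv.Perm.mul_apply] using this

lemma invariant_mem {σ : Equiv.Perm ι} (hsq : ∀ i, σ (σ i) = i) {t : Finset ι} {x : ι}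
    (hx : x ∈ t ∪ t.image σ) : σ x ∈ t ∪ t.image σ := by
  classical
  rcases Finset.mem_union.mp hx with h | h
  · exact Finset.mem_union_right _ (Finset.mem_image_of_mem σ h)
  · rcases Finset.mem_image.mp h with ⟨y, hy, rfl⟩
    rw [hsq]
    exact Finset.mem_union_left _ hy

lemma invariant_iff {σ : Equiv.Perm ι} (hsq : ∀ i, σ (σ i) = i) {t : Finset ι} (x : ι) :
    x ∈ t ∪ t.image σ ↔ σ x ∈ t ∪ t.image σ := by
  refine ⟨invariant_mem hsq, fun h => ?_⟩
  have := invariant_mem hsq h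
  rwa [hsq] at this

lemma filter_union_image [Fintype ι] {σ : Equiv.Perm ι} (hsq : ∀ i, σ (σ i) = i) {t : Finset ι}
    (ht : t ⊆ Finset.univ.filter (fun i => i < σ i)) :
    (t ∪ t.image σ).filter (fun i => i < σ i) = t := by
  classical
  ext i
  simp only [Finset.mem_filter, Finset.mem_union, Finset.mem_image]
  constructor
  · rintro ⟨h | ⟨y, hy, rfl⟩, hlt⟩
    · exact h
    · exfalso
      have hy' : y < σ y := by simpa using ht hy
      rw [hsq] at hlt
      exact absurd (hlt.trans hy') (lt_irrefl _)
  · intro hi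
    exact ⟨Or.inl hi, by simpa using ht hi⟩

lemma subtypePerm_invol {p : ι → Prop} {σ : Equiv.Perm ι} (h : ∀ x, p x ↔ p (σ x))
    (hsq : σ * σ = 1) : (σ.subtypePerm (fun x => (h x).symm)) * (σ.subtypePerm (fun x => (h x).symm)) = 1 := by
  ext x
  exact congrArg Subtype.val (Subtype.ext (sq_apply hsq (x : ι)) :
    (⟨σ (σ (x : ι)), _⟩ : {a // p a}) = ⟨(x : ι), x.2⟩)

lemma glue_invol {p : ι → Prop} [DecidablePred p] {e : Equiv.Perm {a // p a}}
    {f : Equiv.Perm {a // ¬ p a}} (he : e * e = 1) (hf : f * f = 1) :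
    (Equiv.Perm.subtypeCongr e f) * (Equiv.Perm.subtypeCongr e f) = 1 := by
  have : (Equiv.Perm.subtypeCongr e f) * (Equiv.Perm.subtypeCongr e f)
      = Equiv.Perm.subtypeCongr (e * e) (f * f) := by
    rw [Equiv.Perm.mul_def, Equiv.Perm.subtypeCongr.trans]
    rfl
  rw [this, he, hf]
  exact Equiv.Perm.subtypeCongr.refl

lemma glue_fpf {p : ι → Prop} [DecidablePred p] {e : Equiv.Perm {a // p a}}
    {f : Equiv.Perm {a // ¬ p a}} (he : ∀ x, e x ≠ x) (hf : ∀ x, f x ≠ x) :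
    ∀ x, (Equiv.Perm.subtypeCongr e f) x ≠ x := by
  intro x hx
  by_cases h : p x
  · rw [Equiv.Perm.subtypeCongr.left_apply _ _ h] at hx
    exact he ⟨x, h⟩ (Subtype.ext hx)
  · rw [Equiv.Perm.subtypeCongr.right_apply _ _ h] at hx
    exact hf ⟨x, h⟩ (Subtype.ext hx)

lemma prod_subtype_filter [Fintype ι] {p : ι → Prop} [DecidablePred p]
    [inst : Fintype {x // p x}] {σ : Equiv.Perm ι}
    (h : ∀ x, p x ↔ p (σ x)) (F : ι → R) :
    ∏ i ∈ (@Finset.univ _ inst).filter (fun i : {x // p x} => i < σ.subtypePerm (fun x => (h x).symm) i), F (i : ι)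
      = ∏ i ∈ Finset.univ.filter (fun i => p i ∧ i < σ i), F i := by
  refine Finset.prod_bij (fun a _ => (a : ι)) ?_ ?_ ?_ ?_
  · intro a ha
    simp only [Finset.mem_filter, Finset.mem_univ, true_and] at ha ⊢
    exact ⟨a.2, Subtype.coe_lt_coe.mpr ha⟩
  · intro a _ b _ hab
    exact Subtype.ext hab
  · intro b hb
    simp only [Finset.mem_filter, Finset.mem_univ, true_and] at hb
    exact ⟨⟨b, hb.1⟩, Finset.mem_filter.mpr ⟨Finset.mem_univ _, Subtype.mk_lt_mk.mpr hb.2⟩, rfl⟩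
  · intro a _
    rfl

end aux

theorem hafnian_add_powerset {ι : Type*} [Fintype ι] [LinearOrder ι] {R : Type*} [CommSemiring R]
    (A B : Matrix ι ι R) :
    hafnian (A + B) =
      ∑ α ∈ (Finset.univ : Finset ι).powerset,
        hafnian (A.submatrix (fun i : {x : ι // x ∈ α} => (i : ι))
            (fun i : {x : ι // x ∈ α} => (i : ι))) *
        hafnian (B.submatrix (fun i : {x : ι // x ∉ α} => (i : ι))
            (fun i : {x : ι // x ∉ α} => (i : ι))) := by
  classical
  have step1 : hafnian (A + B) =
      ∑ p ∈ (Finset.univ.filter (fun σ : Equiv.Perm ι => σ * σ = 1 ∧ ∀ i, σ i ≠ i)).sigma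
          (fun σ => (Finset.univ.filter (fun i => i < σ i)).powerset),
        (∏ i ∈ p.2, A i (p.1 i)) *
          ∏ i ∈ (Finset.univ.filter (fun i => i < p.1 i)) \ p.2, B i (p.1 i) := by
    rw [hafnian, Finset.sum_sigma]
    refine Finset.sum_congr rfl fun σ _ => ?_
    simp only [Matrix.add_apply]
    exact Finset.prod_add _ _ _
  rw [step1,
    ← Finset.sum_fiberwise_of_maps_to
      (g := fun p : Σ _ : Equiv.Perm ι, Finset ι => p.2 ∪ p.2.image p.1)
      (fun p _ => Finset.mem_powerset.mpr (Finset.subset_univ _)) _]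
  refine Finset.sum_congr rfl fun α hα => ?_
  rw [hafnian, hafnian, Finset.sum_mul_sum, ← Finset.sum_product']
  have key : ∀ p : Σ _ : Equiv.Perm ι, Finset ι,
      p ∈ ((Finset.univ.filter (fun σ : Equiv.Perm ι => σ * σ = 1 ∧ ∀ i, σ i ≠ i)).sigma
          (fun σ => (Finset.univ.filter (fun i => i < σ i)).powerset)).filter
          (fun p => p.2 ∪ p.2.image p.1 = α) →
      (p.1 * p.1 = 1 ∧ ∀ i, p.1 i ≠ i) ∧ p.2 ⊆ Finset.univ.filter (fun i => i < p.1 i)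
        ∧ p.2 ∪ p.2.image p.1 = α := by
    intro p hp
    simp only [Finset.mem_filter, Finset.mem_sigma, Finset.mem_powerset, Finset.mem_univ,
      true_and] at hp
    tauto
  have hIff : ∀ p : Σ _ : Equiv.Perm ι, Finset ι,
      p ∈ ((Finset.univ.filter (fun σ : Equiv.Perm ι => σ * σ = 1 ∧ ∀ i, σ i ≠ i)).sigma
          (fun σ => (Finset.univ.filter (fun i => i < σ i)).powerset)).filter
          (fun p => p.2 ∪ p.2.image p.1 = α) →
      ∀ x : ι, x ∈ α ↔ p.1 x ∈ α := by
    intro p hp x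
    obtain ⟨⟨h1, h2⟩, hsub, hUα⟩ := key p hp
    rw [← hUα]
    exact invariant_iff (sq_apply h1) x
  have hginv : ∀ (e : Equiv.Perm {x : ι // x ∈ α}) (f : Equiv.Perm {x : ι // x ∉ α}) (x : ι),
      x ∈ α → Equiv.Perm.subtypeCongr e f x ∈ α := by
    intro e f x hx
    rw [Equiv.Perm.subtypeCongr.left_apply _ _ hx]
    exact (e ⟨x, hx⟩).2
  refine Finset.sum_bij'
    (fun p hp => (p.1.subtypePerm (fun x => (hIff p hp x).symm), p.1.subtypePerm (fun x => not_congr (hIff p hp x).symm)))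
    (fun q _ => ⟨Equiv.Perm.subtypeCongr q.1 q.2,
        α.filter (fun i => i < Equiv.Perm.subtypeCongr q.1 q.2 i)⟩)
    ?_ ?_ ?_ ?_ ?_
  · -- forward maps into product
    intro p hp
    obtain ⟨⟨h1, h2⟩, hsub, hUα⟩ := key p hp
    simp only [Finset.mem_product, Finset.mem_filter, Finset.mem_univ, true_and]
    exact ⟨⟨subtypePerm_invol (hIff p hp) h1, fun x hx => h2 x (congrArg Subtype.val hx)⟩,
      ⟨subtypePerm_invol (fun x => not_congr (hIff p hp x)) h1, fun x hx => h2 x (congrArg Subtype.val hx)⟩⟩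
  · -- backward maps into filtered sigma
    intro q hq
    simp only [Finset.mem_product, Finset.mem_filter, Finset.mem_univ, true_and] at hq
    obtain ⟨⟨ha1, ha2⟩, hb1, hb2⟩ := hq
    have hσ1 : (Equiv.Perm.subtypeCongr q.1 q.2) * (Equiv.Perm.subtypeCongr q.1 q.2) = 1 :=
      glue_invol ha1 hb1
    have hσ2 := glue_fpf ha2 hb2
    have hsq := sq_apply hσ1
    simp only [Finset.mem_filter, Finset.mem_sigma, Finset.mem_powerset, Finset.mem_univ,
      true_and]
    refine ⟨⟨⟨hσ1, hσ2⟩, fun i hi => ?_⟩, ?_⟩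
    · simp only [Finset.mem_filter] at hi ⊢
      exact ⟨Finset.mem_univ _, hi.2⟩
    · apply Finset.Subset.antisymm
      · apply Finset.union_subset
        · exact Finset.filter_subset _ _
        · intro x hx
          rcases Finset.mem_image.mp hx with ⟨y, hy, rfl⟩
          exact hginv _ _ y (Finset.mem_filter.mp hy).1
      · intro x hx
        rcases lt_trichotomy x (Equiv.Perm.subtypeCongr q.1 q.2 x) with h | h | h
        · exact Finset.mem_union_left _ (Finset.mem_filter.mpr ⟨hx, h⟩)
        · exact absurd h.symm (hσ2 x)
        · refine Finset.mem_union_right _ (Finset.mem_image.mpr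
            ⟨Equiv.Perm.subtypeCongr q.1 q.2 x, Finset.mem_filter.mpr ⟨hginv _ _ x hx, ?_⟩,
              hsq x⟩)
          rw [hsq]
          exact h
  · -- left inverse
    rintro ⟨σ, t⟩ hp
    obtain ⟨⟨h1, h2⟩, hsub, hUα⟩ := key _ hp
    have hσ : Equiv.Perm.subtypeCongr (σ.subtypePerm (fun x => (hIff ⟨σ, t⟩ hp x).symm))
        (σ.subtypePerm (fun x => not_congr (hIff ⟨σ, t⟩ hp x).symm)) = σ := by
      ext x
      by_cases hx : x ∈ α
      · rw [Equiv.Perm.subtypeCongr.left_apply _ _ hx]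
        rfl
      · rw [Equiv.Perm.subtypeCongr.right_apply _ _ hx]
        rfl
    have ht : α.filter (fun i => i < σ i) = t := by
      rw [← hUα]
      exact filter_union_image (sq_apply h1) hsub
    dsimp only
    rw [hσ, ht]
  · -- right inverse
    rintro ⟨qa, qb⟩ hq
    simp only [Prod.mk.injEq]
    constructor
    · ext x
      show Equiv.Perm.subtypeCongr qa qb (x : ι) = ((qa x : {x : ι // x ∈ α}) : ι)
      rw [Equiv.Perm.subtypeCongr.left_apply _ _ x.2]
    · ext x
      show Equiv.Perm.subtypeCongr qa qb (x : ι) = ((qb x : {x : ι // x ∉ α}) : ι)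
      rw [Equiv.Perm.subtypeCongr.right_apply _ _ x.2]
  · -- values agree
    rintro ⟨σ, t⟩ hp
    obtain ⟨⟨h1, h2⟩, hsub, hUα⟩ := key _ hp
    have htα : t ⊆ α := fun i hi => hUα ▸ Finset.mem_union_left _ hi
    have hfui := filter_union_image (sq_apply h1) (t := t) hsub
    have ht : Finset.univ.filter (fun i => i ∈ α ∧ i < σ i) = t := by
      ext i
      simp only [Finset.mem_filter, Finset.mem_univ, true_and]
      constructor
      · rintro ⟨hiα, hlt⟩
        rw [← hfui]
        rw [← hUα] at hiα
        exact Finset.mem_filter.mpr ⟨hiα, hlt⟩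
      · intro hi
        exact ⟨htα hi, by simpa using hsub hi⟩
    have htB : Finset.univ.filter (fun i => i ∉ α ∧ i < σ i)
        = Finset.univ.filter (fun i => i < σ i) \ t := by
      ext i
      simp only [Finset.mem_filter, Finset.mem_sdiff, Finset.mem_univ, true_and]
      constructor
      · rintro ⟨hni, hlt⟩
        exact ⟨hlt, fun hit => hni (htα hit)⟩
      · rintro ⟨hlt, hnt⟩
        refine ⟨fun hiα => hnt ?_, hlt⟩
        rw [← ht]
        simp only [Finset.mem_filter, Finset.mem_univ, true_and]
        exact ⟨hiα, hlt⟩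
    symm
    dsimp only
    congr 1
    · exact (prod_subtype_filter (hIff ⟨σ, t⟩ hp) (fun j => A j (σ j))).trans
        (Finset.prod_congr ht fun _ _ => rfl)
    · exact (prod_subtype_filter (fun x => not_congr (hIff ⟨σ, t⟩ hp x))
        (fun j => B j (σ j))).trans (Finset.prod_congr htB fun _ _ => rfl)

section odd
variable {ι : Type*} [Fintype ι] [LinearOrder ι] {R : Type*} [CommSemiring R]

lemma hafnian_eq_zero_of_odd (A : Matrix ι ι R) (h : ¬ Even (Fintype.card ι)) :
    hafnian A = 0 := by
  rw [hafnian, Finset.filter_false_of_mem, Finset.sum_empty]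
  rintro σ - ⟨h1, h2⟩
  have hsq := sq_apply h1
  exact h <| by
    have hsplit : (Finset.univ.filter (fun i => i < σ i)).card
        + (Finset.univ.filter (fun i => ¬ i < σ i)).card = Fintype.card ι := by
      simpa using Finset.card_filter_add_card_filter_not
        (s := (Finset.univ : Finset ι)) (p := fun i => i < σ i)
    have hcard : (Finset.univ.filter (fun i => i < σ i)).card
        = (Finset.univ.filter (fun i => ¬ i < σ i)).card := by
      refine Finset.card_bij' (fun a _ => σ a) (fun a _ => σ a) ?_ ?_ ?_ ?_
      · intro a ha
        simp only [Finset.mem_filter, Finset.mem_univ, true_and, not_lt] at ha ⊢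
        rw [hsq]; exact le_of_lt ha
      · intro a ha
        simp only [Finset.mem_filter, Finset.mem_univ, true_and, not_lt] at ha ⊢
        rw [hsq]
        exact lt_of_le_of_ne ha (h2 a)
      · intro a _; exact hsq a
      · intro a _; exact hsq a
    rw [← hsplit, ← hcard]
    exact ⟨_, rfl⟩

end odd

lemma sum_range_even {M : Type*} [AddCommMonoid M] (m : ℕ) (f : ℕ → M)
    (h0 : ∀ j ∈ Finset.range (2 * m + 1), ¬ Even j → f j = 0) :
    ∑ j ∈ Finset.range (2 * m + 1), f j = ∑ k ∈ Finset.range (m + 1), f (2 * k) := by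
  have hsets : (Finset.range (2 * m + 1)).filter (fun j => Even j)
      = (Finset.range (m + 1)).image (fun k => 2 * k) := by
    ext j
    simp only [Finset.mem_filter, Finset.mem_range, Finset.mem_image]
    constructor
    · rintro ⟨hj, k, rfl⟩
      exact ⟨k, by omega, by omega⟩
    · rintro ⟨k, hk, rfl⟩
      exact ⟨by omega, ⟨k, by omega⟩⟩
  rw [← Finset.sum_filter_of_ne (fun j hj hne => by_contra fun he => hne (h0 j hj he)),
    hsets, Finset.sum_image (fun a _ b _ hab => by omega)]

set_option maxHeartbeats 1000000 in
/-- For symmetric matrices `A`, `B` of order `2m` with zero diagonal,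
`Hf(A + B) = Σ_{k=0}^{m} Σ_{α ∈ Q_{2k,2m}} Hf(A[α]) · Hf(B(α))`, where `A[α]` is the
principal submatrix of `A` on the rows/columns in `α` and `B(α)` is the principal
submatrix of `B` on the rows/columns not in `α`. -/
theorem hafnian_add {R : Type*} [CommRing R] (m : ℕ)
    (A B : Matrix (Fin (2 * m)) (Fin (2 * m)) R)
    (hA : A.IsSymm) (hB : B.IsSymm)
    (hdA : ∀ i, A i i = 0) (hdB : ∀ i, B i i = 0) :
    hafnian (A + B) =
      ∑ k ∈ Finset.range (m + 1),
        ∑ α ∈ Finset.powersetCard (2 * k) (Finset.univ : Finset (Fin (2 * m))),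
          hafnian (A.submatrix
              (fun i : {x : Fin (2 * m) // x ∈ α} => (i : Fin (2 * m)))
              (fun i : {x : Fin (2 * m) // x ∈ α} => (i : Fin (2 * m)))) *
          hafnian (B.submatrix
              (fun i : {x : Fin (2 * m) // x ∉ α} => (i : Fin (2 * m)))
              (fun i : {x : Fin (2 * m) // x ∉ α} => (i : Fin (2 * m)))) := by
  classical
  rw [hafnian_add_powerset A B, Finset.sum_powerset, Finset.card_univ, Fintype.card_fin]
  refine Eq.trans (sum_range_even m _ ?_) ?_
  · intro j hj hne
    refine Finset.sum_eq_zero fun α hα => ?_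
    have hαc : α.card = j := (Finset.mem_powersetCard.mp hα).2
    refine mul_eq_zero_of_left (hafnian_eq_zero_of_odd _ (fun he => hne ?_)) _
    rw [Fintype.card_congr (Equiv.refl {x : Fin (2 * m) // x ∈ α}), Fintype.card_coe, hαc] at he
    exact he
  · refine Finset.sum_congr rfl fun k _ => Finset.sum_congr rfl fun α _ => ?_
    congr 1 <;> congr!
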